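/- For a root of unity λ, the element 1 − λ is a unit in the ring ℤ[λ] if and only if the order of λ is not 1 and not a power of a prime number. -/

import Mathlib

open Polynomial Finset

/-- Theorem 4.5 (b): for a root of unity `λ`, the element `1 - λ` is a unit in `ℤ[λ]`
if and only if the order of `λ` is neither `1` nor a power of a prime number. -/
theorem one_sub_rootOfUnity_isUnit_iff (lam : ℂ) (h : ∃ n : ℕ, 0 < n ∧ lam ^ n = 1) :
    IsUnit (⟨1 - lam, Subalgebra.sub_mem _ (Subalgebra.one_mem _)
        (Algebra.self_mem_adjoin_singleton ℤ lam)⟩ : Algebra.adjoin ℤ {lam}) ↔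
      (orderOf lam ≠ 1 ∧ ¬ IsPrimePow (orderOf lam)) := by
  obtain ⟨n0, hn0, hpow0⟩ := h
  have hfin : IsOfFinOrder lam := isOfFinOrder_iff_pow_eq_one.mpr ⟨n0, hn0, hpow0⟩
  set n := orderOf lam with hn
  have hnpos : 0 < n := hfin.orderOf_pos
  haveI : NeZero n := ⟨hnpos.ne'⟩
  have hprim : IsPrimitiveRoot lam n :=
    ⟨pow_orderOf_eq_one lam, fun l hl => orderOf_dvd_of_pow_eq_one hl⟩
  set R := Algebra.adjoin ℤ {lam} with hR
  set l : R := ⟨lam, Algebra.self_mem_adjoin_singleton ℤ lam⟩ with hl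
  set x : R := ⟨1 - lam, Subalgebra.sub_mem _ (Subalgebra.one_mem _)
        (Algebra.self_mem_adjoin_singleton ℤ lam)⟩ with hx
  have hxl : x = 1 - l := by ext; simp [hx, hl]
  -- key: for every primitive root μ there is y ∈ R with value 1-μ, unit-equiv to x
  have key : ∀ μ ∈ primitiveRoots n ℂ, ∃ y : R,
      (y : ℂ) = 1 - μ ∧ (IsUnit x → IsUnit y) ∧ (IsUnit y → IsUnit x) := by
    intro μ hμS
    have hμ : IsPrimitiveRoot μ n := (mem_primitiveRoots hnpos).mp hμS
    obtain ⟨k, -, hk⟩ := hprim.eq_pow_of_pow_eq_one hμ.pow_eq_one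
    obtain ⟨j, -, hj⟩ := hμ.eq_pow_of_pow_eq_one hprim.pow_eq_one
    refine ⟨1 - l ^ k, ?_, ?_, ?_⟩
    · simp [hl, hk]
    · intro hux
      have hg : (∑ i ∈ range j, (l ^ k) ^ i) * (l ^ k - 1) = (l ^ k) ^ j - 1 :=
        geom_sum_mul _ _
      have hkl : (l ^ k) ^ j = l := by
        ext; simp [hl]; rw [hk, hj]
      have hstep : (1:R) - (l ^ k) ^ j = (1 - l ^ k) * (∑ i ∈ range j, (l ^ k) ^ i) := by
        linear_combination hg
      rw [hkl] at hstep
      have : x = (1 - l ^ k) * (∑ i ∈ range j, (l ^ k) ^ i) := by rw [hxl, hstep]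
      exact isUnit_of_mul_isUnit_left (this ▸ hux)
    · intro huy
      have hg : (∑ i ∈ range k, l ^ i) * (l - 1) = l ^ k - 1 := geom_sum_mul _ _
      have : (1 - l ^ k) = x * (∑ i ∈ range k, l ^ i) := by
        rw [hxl]; linear_combination hg
      rw [this] at huy
      exact isUnit_of_mul_isUnit_left huy
  choose y hyval hy₁ hy₂ using key
  -- the product of the y's equals the evaluation of the cyclotomic polynomial at 1
  set P : R := ∏ μ ∈ (primitiveRoots n ℂ).attach, y μ.1 μ.2 with hP
  have hPval : (P : ℂ) = (((cyclotomic n ℤ).eval 1 : ℤ) : ℂ) := by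
    have h1 : (((cyclotomic n ℤ).eval 1 : ℤ) : ℂ) = (cyclotomic n ℂ).eval 1 := by
      rw [← map_cyclotomic_int n ℂ, eval_one_map]
      simp
    have h2 : (cyclotomic n ℂ).eval 1 = ∏ μ ∈ primitiveRoots n ℂ, (1 - μ) := by
      rw [cyclotomic_eq_prod_X_sub_primitiveRoots hprim]
      simp [eval_prod]
    have h3 : (P : ℂ) = ∏ μ ∈ primitiveRoots n ℂ, (1 - μ) := by
      rw [hP]
      rw [← Finset.prod_attach (primitiveRoots n ℂ) (fun μ => 1 - μ)]
      push_cast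
      exact Finset.prod_congr rfl fun μ _ => hyval μ.1 μ.2
    rw [h3, ← h2]; exact h1.symm
  have hlamS : lam ∈ primitiveRoots n ℂ := (mem_primitiveRoots hnpos).mpr hprim
  constructor
  · intro hux
    -- forward: 1 - lam unit implies n ≠ 1 and not a prime power
    have hn1 : n ≠ 1 := by
      intro h1
      have : lam = 1 := orderOf_eq_one_iff.mp h1
      have hx0 : x = 0 := by ext; simp [hx, this]
      exact hux.ne_zero hx0
    refine ⟨hn1, ?_⟩
    intro hpp
    obtain ⟨p, k, hp, hk, hpk⟩ := hpp
    have hpnat : p.Prime := Nat.prime_iff.mpr hp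
    haveI : Fact p.Prime := ⟨hpnat⟩
    obtain ⟨k', rfl⟩ : ∃ k', k = k' + 1 := ⟨k - 1, (Nat.succ_pred_eq_of_pos hk).symm⟩
    have hev : (cyclotomic n ℤ).eval 1 = p := by
      rw [← hpk]; exact eval_one_cyclotomic_prime_pow k'
    -- P is a unit since each factor is
    have hPu : IsUnit P := by
      rw [hP]
      exact Finset.prod_induction _ IsUnit (fun a b ha hb => ha.mul hb) isUnit_one
        (fun μ _ => hy₁ μ.1 μ.2 hux)
    obtain ⟨v, hv⟩ := hPu.exists_right_inv
    -- so p * v = 1 in ℂ with v integral over ℤ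
    rw [hev] at hPval
    have hv' : ((p : ℤ) : ℂ) * (v : ℂ) = 1 := by
      have h := congrArg (Subalgebra.val R) hv
      simp only [map_mul, map_one] at h
      rwa [show (Subalgebra.val R) P = (P : ℂ) from rfl, hPval] at h
    have hlamint : IsIntegral ℤ lam := by
      refine ⟨X ^ n - 1, monic_X_pow_sub_C 1 hnpos.ne', ?_⟩
      simp [hprim.pow_eq_one]
    have hvint : IsIntegral ℤ (v : ℂ) :=
      adjoin_le_integralClosure hlamint v.2
    have hp0 : (p : ℂ) ≠ 0 := by exact_mod_cast hpnat.ne_zero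
    have hveq : (v : ℂ) = algebraMap ℚ ℂ ((p : ℚ)⁻¹) := by
      field_simp
      have : ((p : ℤ) : ℂ) = (p : ℂ) := by push_cast; ring
      rw [this] at hv'
      rw [map_div₀, map_one, map_natCast, eq_div_iff hp0]
      linear_combination hv'
    have hqint : IsIntegral ℤ ((p : ℚ)⁻¹) := by
      have := hvint
      rw [hveq] at this
      exact (isIntegral_algHom_iff (IsScalarTower.toAlgHom ℤ ℚ ℂ)
        (algebraMap ℚ ℂ).injective).mp this
    obtain ⟨z, hz⟩ := IsIntegrallyClosed.isIntegral_iff.mp hqint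
    have hzq : (p : ℚ) * (z : ℚ) = 1 := by
      have hpq : (p : ℚ) ≠ 0 := by exact_mod_cast hpnat.ne_zero
      rw [show ((z : ℤ) : ℚ) = (p:ℚ)⁻¹ from hz]
      field_simp
    have hzz : (p : ℤ) * z = 1 := by exact_mod_cast hzq
    have : (p : ℤ) = 1 ∨ (p : ℤ) = -1 := Int.isUnit_iff.mp (IsUnit.of_mul_eq_one _ hzz)
    have hp1 : 1 < p := hpnat.one_lt
    omega
  · rintro ⟨hn1, hnpp⟩
    -- backward: cyclotomic evaluates to 1
    have hev : (cyclotomic n ℤ).eval 1 = 1 := by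
      apply eval_one_cyclotomic_not_prime_pow
      intro p hp k hpk
      rcases Nat.eq_zero_or_pos k with rfl | hk
      · simp at hpk; exact hn1 hpk.symm
      · exact hnpp ⟨p, k, hp.prime, hk, hpk⟩
    have hP1 : P = 1 := by
      have : (P : ℂ) = 1 := by rw [hPval, hev]; norm_num
      exact Subtype.ext (by simpa using this)
    have := Finset.mul_prod_erase (primitiveRoots n ℂ).attach
      (fun μ => y μ.1 μ.2) (Finset.mem_attach _ ⟨lam, hlamS⟩)
    rw [← hP, hP1] at this
    exact hy₂ lam hlamS (IsUnit.of_mul_eq_one _ this)
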